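/- Let (K, v) be a separably closed valued field of characteristic p > 0, let d ≥ 1, and let a_0, …, a_d ∈ K with a_d ≠ 0. Then the set {v(m) : m ∈ K, m ≠ 0, ∑_{i=0}^{d} a_i·m^{p^i} = 0} of valuations of nonzero roots of the additive polynomial ∑_{i=0}^{d} a_i·x^{p^i} has at most 2^{d−1} elements. -/

import Mathlib

/-- A valuation on a field `K` with values in the linearly ordered abelian group `Γ`
(together with `∞ = ⊤`), surjective onto `Γ`, i.e. `Γ = v(K^×)`. -/
structure ValuedFieldAux (K : Type*) [Field K] (Γ : Type*)
    [AddCommGroup Γ] [LinearOrder Γ] [IsOrderedAddMonoid Γ] where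
  v : K → WithTop Γ
  v_eq_top_iff : ∀ x : K, v x = ⊤ ↔ x = 0
  v_mul : ∀ x y : K, v (x * y) = v x + v y
  v_add : ∀ x y : K, min (v x) (v y) ≤ v (x + y)
  v_surj : ∀ γ : Γ, ∃ x : K, v x = (γ : WithTop Γ)


namespace ValuedFieldAux

private lemma tf {Γ : Type*} [AddCommGroup Γ] [LinearOrder Γ] [IsOrderedAddMonoid Γ] {γ : Γ} {n : ℕ}
    (hn : n ≠ 0) (h : n • γ = 0) : γ = 0 := by
  rcases lt_trichotomy γ 0 with h1 | h1 | h1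
  · exact absurd h (nsmul_neg h1 hn).ne
  · exact h1
  · exact absurd h (nsmul_pos h1 hn).ne'

variable {K : Type*} [Field K] {Γ : Type*} [AddCommGroup Γ] [LinearOrder Γ] [IsOrderedAddMonoid Γ] (vf : ValuedFieldAux K Γ)

lemma v_one : vf.v 1 = 0 := by
  have h := vf.v_mul 1 1
  rw [one_mul] at h
  have h1 : vf.v 1 ≠ ⊤ := fun ht => one_ne_zero ((vf.v_eq_top_iff 1).mp ht)
  obtain ⟨γ, hγ⟩ := WithTop.ne_top_iff_exists.mp h1
  rw [← hγ, ← WithTop.coe_add, WithTop.coe_eq_coe] at h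
  rw [← hγ, WithTop.coe_eq_zero]
  exact add_eq_right.mp h.symm

lemma v_pow (x : K) (n : ℕ) : vf.v (x ^ n) = n • vf.v x := by
  induction n with
  | zero => simpa using vf.v_one
  | succ n ih => rw [pow_succ, vf.v_mul, ih, succ_nsmul]

lemma v_of_pow_eq_one {x : K} {n : ℕ} (hn : n ≠ 0) (h : x ^ n = 1) : vf.v x = 0 := by
  have hx : x ≠ 0 := by rintro rfl; rw [zero_pow hn] at h; exact zero_ne_one h
  have hx' : vf.v x ≠ ⊤ := fun ht => hx ((vf.v_eq_top_iff x).mp ht)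
  obtain ⟨γ, hγ⟩ := WithTop.ne_top_iff_exists.mp hx'
  have h2 : vf.v (x ^ n) = 0 := by rw [h, vf.v_one]
  rw [vf.v_pow, ← hγ, ← WithTop.coe_nsmul, WithTop.coe_eq_zero] at h2
  rw [← hγ, WithTop.coe_eq_zero]
  exact tf hn h2

lemma v_neg (x : K) : vf.v (-x) = vf.v x := by
  have h1 : vf.v (-1 : K) = 0 := vf.v_of_pow_eq_one two_ne_zero (by ring)
  have h2 : -x = (-1) * x := by ring
  rw [h2, vf.v_mul, h1, zero_add]

lemma v_add_eq {x y : K} (h : vf.v x < vf.v y) : vf.v (x + y) = vf.v x := by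
  refine le_antisymm ?_ ?_
  · by_contra hlt
    push_neg at hlt
    have h2 : vf.v x = vf.v ((x + y) + (-y)) := by congr 1; ring
    have h3 := vf.v_add (x + y) (-y)
    rw [vf.v_neg, ← h2] at h3
    exact absurd h3 (not_le.mpr (lt_min hlt h))
  · have h4 := vf.v_add x y
    rwa [min_eq_left h.le] at h4

lemma v_sum {ι : Type*} (s : Finset ι) (f : ι → K) (hne : s.Nonempty)
    (h0 : ∀ i ∈ s, f i ≠ 0)
    (hinj : ∀ i ∈ s, ∀ j ∈ s, vf.v (f i) = vf.v (f j) → i = j) :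
    ∃ i ∈ s, vf.v (∑ j ∈ s, f j) = vf.v (f i) := by
  classical
  induction s using Finset.strongInduction with
  | _ s ih =>
    obtain ⟨i0, hi0, hmin⟩ := Finset.exists_min_image s (fun i => vf.v (f i)) hne
    have hsum : ∑ j ∈ s, f j = f i0 + ∑ j ∈ s.erase i0, f j :=
      (Finset.add_sum_erase s f hi0).symm
    rcases (s.erase i0).eq_empty_or_nonempty with he | he
    · refine ⟨i0, hi0, ?_⟩
      rw [hsum, he, Finset.sum_empty, add_zero]
    · obtain ⟨j, hj, hvj⟩ := ih (s.erase i0) (Finset.erase_ssubset hi0) he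
        (fun i hi => h0 i (Finset.mem_of_mem_erase hi))
        (fun i hi j hj hij => hinj i (Finset.mem_of_mem_erase hi) j (Finset.mem_of_mem_erase hj) hij)
      refine ⟨i0, hi0, ?_⟩
      rw [hsum]
      apply vf.v_add_eq
      rw [hvj]
      have hle := hmin j (Finset.mem_of_mem_erase hj)
      have hne' : vf.v (f i0) ≠ vf.v (f j) := fun h =>
        (Finset.ne_of_mem_erase hj) (hinj j (Finset.mem_of_mem_erase hj) i0 hi0 h.symm)
      exact lt_of_le_of_ne hle hne'

end ValuedFieldAux

/-- Let `(K, v)` be a separably closed valued field of characteristic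
`p > 0`, `d ≥ 1`, and `a_0, …, a_d ∈ K` with `a_d ≠ 0`. Then the set of valuations of
nonzero roots of the additive polynomial `∑ a_i·x^{p^i}` has at most `2^{d−1}`
elements. -/
theorem stmt_11 (p : ℕ) (hp : p.Prime) (K : Type*) [Field K] [CharP K p] [IsSepClosed K]
    (Γ : Type*) [AddCommGroup Γ] [LinearOrder Γ] [IsOrderedAddMonoid Γ] (vf : ValuedFieldAux K Γ)
    (d : ℕ) (hd : 1 ≤ d) (a : ℕ → K) (had : a d ≠ 0) :
    (vf.v '' {m : K | m ≠ 0 ∧ ∑ i ∈ Finset.range (d + 1), a i * m ^ (p ^ i) = 0}).Finite ∧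
    (vf.v '' {m : K | m ≠ 0 ∧ ∑ i ∈ Finset.range (d + 1), a i * m ^ (p ^ i) = 0}).ncard
      ≤ 2 ^ (d - 1) := by
  classical
  haveI : Fact p.Prime := ⟨hp⟩
  set RootP : K → Prop := fun x => ∑ i ∈ Finset.range (d + 1), a i * x ^ (p ^ i) = 0 with hRootP
  set P : Polynomial K := ∑ i ∈ Finset.range (d + 1), Polynomial.C (a i) * Polynomial.X ^ (p ^ i)
    with hP
  have hPeval : ∀ x : K, P.eval x = ∑ i ∈ Finset.range (d + 1), a i * x ^ (p ^ i) := by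
    intro x; simp [hP, Polynomial.eval_finset_sum]
  have hP0 : P ≠ 0 := by
    intro h
    have hc : P.coeff (p ^ d) = a d := by
      rw [hP, Polynomial.finset_sum_coeff]
      rw [Finset.sum_eq_single d]
      · simp [Polynomial.coeff_C_mul_X_pow]
      · intro i hi hid
        rw [Polynomial.coeff_C_mul_X_pow]
        have : p ^ d ≠ p ^ i := fun he =>
          hid ((Nat.pow_right_injective hp.two_le he).symm)
        simp [this]
      · intro h'; exact absurd (Finset.self_mem_range_succ d) h'
    rw [h, Polynomial.coeff_zero] at hc
    exact had hc.symm
  have hPdeg : P.natDegree ≤ p ^ d := by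
    rw [hP]
    refine le_trans (Polynomial.natDegree_sum_le _ _) ?_
    rw [Finset.fold_max_le]
    refine ⟨Nat.zero_le _, fun i hi => ?_⟩
    refine le_trans (Polynomial.natDegree_C_mul_X_pow_le _ _) ?_
    exact Nat.pow_le_pow_right hp.pos (Nat.lt_succ_iff.mp (Finset.mem_range.mp hi))
  have hRfin : {x : K | RootP x}.Finite := by
    have h : {x : K | RootP x} = {x : K | P.IsRoot x} := by
      ext x; simp [hRootP, Polynomial.IsRoot, hPeval]
    rw [h]
    exact P.finite_setOf_isRoot hP0
  set RF : Finset K := hRfin.toFinset with hRF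
  have hRFcard : RF.card ≤ p ^ d := by
    have hsub : RF ⊆ P.roots.toFinset := by
      intro x hx
      rw [hRF, Set.Finite.mem_toFinset] at hx
      rw [Multiset.mem_toFinset, Polynomial.mem_roots hP0]
      rw [Polynomial.IsRoot, hPeval]
      exact hx
    calc RF.card ≤ P.roots.toFinset.card := Finset.card_le_card hsub
      _ ≤ Multiset.card P.roots := Multiset.toFinset_card_le _
      _ ≤ P.natDegree := P.card_roots'
      _ ≤ p ^ d := hPdeg
  have hradd : ∀ x y : K, RootP x → RootP y → RootP (x + y) := by
    intro x y hx hy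
    have h : ∀ i : ℕ, a i * (x + y) ^ p ^ i = a i * x ^ p ^ i + a i * y ^ p ^ i := by
      intro i; rw [add_pow_char_pow, mul_add]
    simp only [hRootP] at *
    rw [Finset.sum_congr rfl (fun i _ => h i), Finset.sum_add_distrib, hx, hy, add_zero]
  let c : ZMod p →+* K := ZMod.castHom dvd_rfl K
  have hcinj : Function.Injective c := RingHom.injective (c : ZMod p →+* K)
  have hcpow : ∀ (z : ZMod p) (i : ℕ), (c z) ^ (p ^ i) = c z := by
    intro z i
    rw [← map_pow]
    congr 1
    induction i with
    | zero => simp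
    | succ i ih => rw [pow_succ, pow_mul, ih, ZMod.pow_card]
  have hrsmul : ∀ (z : ZMod p) (x : K), RootP x → RootP (c z * x) := by
    intro z x hx
    simp only [hRootP] at *
    have h : ∀ i ∈ Finset.range (d + 1), a i * (c z * x) ^ p ^ i = c z * (a i * x ^ p ^ i) := by
      intro i _; rw [mul_pow, hcpow]; ring
    rw [Finset.sum_congr rfl h, ← Finset.mul_sum, hx, mul_zero]
  have hrzero : RootP 0 := by
    simp only [hRootP]
    refine Finset.sum_eq_zero fun i _ => ?_
    rw [zero_pow (pow_ne_zero i hp.ne_zero), mul_zero]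
  set S : Set K := {m : K | m ≠ 0 ∧ ∑ i ∈ Finset.range (d + 1), a i * m ^ (p ^ i) = 0} with hS
  have hSsub : S ⊆ {x : K | RootP x} := fun x hx => hx.2
  have hSfin : S.Finite := hRfin.subset hSsub
  have hVfin : (vf.v '' S).Finite := hSfin.image _
  refine ⟨hVfin, ?_⟩
  set T : Finset (WithTop Γ) := hVfin.toFinset with hT
  have hTcard : (vf.v '' S).ncard = T.card := Set.ncard_eq_toFinset_card _ hVfin
  have hrep : ∀ t : {x // x ∈ T}, ∃ m : K, m ∈ S ∧ vf.v m = (t : WithTop Γ) := by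
    intro t
    have h : (t : WithTop Γ) ∈ T := t.2
    rw [Set.Finite.mem_toFinset] at h
    obtain ⟨m, hm, hvm⟩ := h
    exact ⟨m, hm, hvm⟩
  choose m hmS hmv using hrep
  set ψ : ({x // x ∈ T} → ZMod p) → K := fun f => ∑ t : {x // x ∈ T}, c (f t) * m t with hψ
  have hψroot : ∀ f, RootP (ψ f) := by
    intro f
    rw [hψ]
    exact Finset.sum_induction _ RootP hradd hrzero
      (fun t _ => hrsmul (f t) (m t) (hmS t).2)
  have hψsub : ∀ f g, ψ f - ψ g = ψ (f - g) := by
    intro f g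
    simp only [hψ, Pi.sub_apply, map_sub, sub_mul]
    rw [Finset.sum_sub_distrib]
  have hψinj : Function.Injective ψ := by
    intro f g hfg
    by_contra hne
    have hzero : ψ (f - g) = 0 := by rw [← hψsub, hfg, sub_self]
    set b : {x // x ∈ T} → ZMod p := f - g with hb
    have hbne : ∃ t, b t ≠ 0 := by
      by_contra hall
      push_neg at hall
      exact hne (sub_eq_zero.mp (funext hall))
    set s : Finset {x // x ∈ T} := Finset.univ.filter (fun t => b t ≠ 0) with hs
    obtain ⟨t0, ht0⟩ := hbne
    have hsne : s.Nonempty := ⟨t0, by simp [hs, ht0]⟩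
    have hceq : ψ b = ∑ t ∈ s, c (b t) * m t := by
      rw [hψ]
      refine (Finset.sum_subset (Finset.subset_univ s) ?_).symm
      intro t _ hts
      have hbz : b t = 0 := by
        by_contra hbz
        exact hts (by simp [hs, hbz])
      rw [hbz, map_zero, zero_mul]
    have h0 : ∀ t ∈ s, c (b t) * m t ≠ 0 := by
      intro t ht
      rw [hs, Finset.mem_filter] at ht
      have hz : c (b t) ≠ 0 := fun hcz => ht.2 (hcinj (by rwa [map_zero]))
      exact mul_ne_zero hz (hmS t).1
    have hterm : ∀ t ∈ s, vf.v (c (b t) * m t) = (t : WithTop Γ) := by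
      intro t ht
      rw [hs, Finset.mem_filter] at ht
      have hv0 : vf.v (c (b t)) = 0 := by
        refine vf.v_of_pow_eq_one (n := p - 1) (Nat.sub_ne_zero_of_lt hp.one_lt) ?_
        rw [← map_pow, ZMod.pow_card_sub_one_eq_one ht.2, map_one]
      rw [vf.v_mul, hv0, zero_add, hmv]
    obtain ⟨t, ht, hvt⟩ := vf.v_sum s (fun t => c (b t) * m t) hsne h0 (by
      intro i hi j hj hij
      rw [hterm i hi, hterm j hj] at hij
      exact Subtype.ext hij)
    rw [hceq] at hzero
    rw [hzero, hterm t ht] at hvt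
    have htop : ((t : WithTop Γ)) = ⊤ := by rw [← hvt, vf.v_eq_top_iff]
    have ht2 : (t : WithTop Γ) ∈ T := t.2
    rw [Set.Finite.mem_toFinset] at ht2
    obtain ⟨x, hx, hvx⟩ := ht2
    rw [← hvx, vf.v_eq_top_iff] at htop
    exact hx.1 htop
  have hcount : p ^ T.card ≤ p ^ d := by
    have h1 : Fintype.card ({x // x ∈ T} → ZMod p) ≤ RF.card := by
      have h2 := Finset.card_le_card_of_injOn (s := Finset.univ) (t := RF) ψ
        (fun f _ => by rw [hRF, Finset.mem_coe, Set.Finite.mem_toFinset]; exact hψroot f)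
        (fun f _ g _ h => hψinj h)
      simpa using h2
    calc p ^ T.card = Fintype.card ({x // x ∈ T} → ZMod p) := by
          rw [Fintype.card_fun]; simp [ZMod.card]
      _ ≤ RF.card := h1
      _ ≤ p ^ d := hRFcard
  have hkd : T.card ≤ d := (Nat.pow_le_pow_iff_right hp.one_lt).mp hcount
  rw [hTcard]
  calc T.card ≤ d := hkd
    _ ≤ 2 ^ (d - 1) := by
        have h := Nat.lt_two_pow_self (n := d - 1)
        omega
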